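/- For every k ≥ 0 and ℓ ≥ 1, the number of occurrences of the pattern [1-1^ℓ-2] in the Peano word X_{2k+1} equals C(4^{2k}-1, ℓ), while the number of occurrences of this pattern in X_{2k+2} is 0. -/

import Mathlib

/-- φ1: reverse the word and apply 1↦4, 2↦1, 3↦2, 4↦3. -/
def phi1 (A : List ℕ) : List ℕ := A.reverse.map (fun x => if x = 1 then 4 else x - 1)

/-- φ2: reverse the word and apply 1↦2, 2↦3, 3↦4, 4↦1. -/
def phi2 (A : List ℕ) : List ℕ := A.reverse.map (fun x => if x = 4 then 1 else x + 1)

/-- The Peano words: `peano 1 = 123`, `peano (n+1) = φ1(Xₙ) 1 Xₙ 2 Xₙ 3 φ2(Xₙ)`. -/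
def peano : ℕ → List ℕ
  | 0 => []
  | 1 => [1, 2, 3]
  | n + 2 =>
      phi1 (peano (n + 1)) ++ [1] ++ peano (n + 1) ++ [2] ++ peano (n + 1)
        ++ [3] ++ phi2 (peano (n + 1))

/-- Number of rises of a word. -/
def rises (w : List ℕ) : ℕ := ((w.zip w.tail).filter (fun p => p.1 < p.2)).length

/-- Number of descents of a word. -/
def descents (w : List ℕ) : ℕ := ((w.zip w.tail).filter (fun p => p.2 < p.1)).length

/-- Number of occurrences of the pattern `[1-1^ℓ-2]`: sets of `ℓ` interior positions at
which the letters equal the first letter of `w`, the first letter being smaller than the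
last letter. -/
def pat112Count (w : List ℕ) (ℓ : ℕ) : ℕ :=
  (Finset.univ.filter (fun s : Finset (Fin w.length) =>
    s.card = ℓ ∧ (∀ i ∈ s, 0 < (i : ℕ) ∧ (i : ℕ) < w.length - 1) ∧
      (∀ i ∈ s, w.get i = w.headI) ∧ w.headI < w.getLastD 0)).card

/- ## Auxiliary lemmas -/

lemma card_filter_get (w : List ℕ) (a : ℕ) :
    (Finset.univ.filter (fun i : Fin w.length => w.get i = a)).card = w.count a := by
  induction w with
  | nil => simp
  | cons x t ih =>
    rw [List.count_cons, ← ih, Finset.card_filter, Finset.card_filter]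
    rw [show (∑ i : Fin (x :: t).length, if (x :: t).get i = a then 1 else 0)
        = ∑ i : Fin (t.length + 1), if (x :: t).get i = a then 1 else 0 from rfl,
      Fin.sum_univ_succ]
    simp only [List.get_cons_succ, List.get_cons_zero, beq_iff_eq]
    rw [add_comm]
    by_cases h : x = a <;> simp [h]

lemma count_map_iff (f : ℕ → ℕ) (A : List ℕ) (a b : ℕ)
    (h : ∀ x ∈ A, (f x = a ↔ x = b)) : (A.map f).count a = A.count b := by
  induction A with
  | nil => rfl
  | cons x t ih =>
    have hx := h x (by simp)
    have ht := ih (fun y hy => h y (by simp [hy]))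
    by_cases hb : x = b
    · subst hb; simp [List.count_cons, ht, hx.mpr rfl]
    · have : ¬ (f x = a) := fun hfa => hb (hx.mp hfa)
      simp [List.count_cons, ht, hb, this]

lemma count_phi1 (A : List ℕ) (a b : ℕ)
    (h : ∀ x ∈ A, ((if x = 1 then 4 else x - 1) = a ↔ x = b)) :
    (phi1 A).count a = A.count b := by
  unfold phi1
  rw [count_map_iff _ _ _ b (fun x hx => h x (by simpa using hx)), List.count_reverse]

lemma count_phi2 (A : List ℕ) (a b : ℕ)
    (h : ∀ x ∈ A, ((if x = 4 then 1 else x + 1) = a ↔ x = b)) :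
    (phi2 A).count a = A.count b := by
  unfold phi2
  rw [count_map_iff _ _ _ b (fun x hx => h x (by simpa using hx)), List.count_reverse]

lemma mem_phi1 (A : List ℕ) (hA : ∀ x ∈ A, 1 ≤ x ∧ x ≤ 4) :
    ∀ y ∈ phi1 A, 1 ≤ y ∧ y ≤ 4 := by
  intro y hy
  simp only [phi1, List.mem_map, List.mem_reverse] at hy
  obtain ⟨x, hx, rfl⟩ := hy
  have := hA x hx
  split <;> omega

lemma mem_phi2 (A : List ℕ) (hA : ∀ x ∈ A, 1 ≤ x ∧ x ≤ 4) :
    ∀ y ∈ phi2 A, 1 ≤ y ∧ y ≤ 4 := by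
  intro y hy
  simp only [phi2, List.mem_map, List.mem_reverse] at hy
  obtain ⟨x, hx, rfl⟩ := hy
  have := hA x hx
  split <;> omega

/-- The letter counts of the Peano words. -/
lemma peano_counts (n : ℕ) :
    (peano (n+1)).count 1 = 4 ^ n ∧ (peano (n+1)).count 3 = 4 ^ n ∧
    (peano (n+1)).count 2 + (peano (n+1)).count 4 = 2 * 4 ^ n - 1 ∧
    (∀ x ∈ peano (n+1), 1 ≤ x ∧ x ≤ 4) := by
  induction n with
  | zero => refine ⟨rfl, rfl, rfl, ?_⟩; decide
  | succ n ih =>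
    obtain ⟨h1, h3, h24, hmem⟩ := ih
    set X := peano (n+1) with hX
    have hmem' : ∀ x ∈ peano (n+2), 1 ≤ x ∧ x ≤ 4 := by
      intro x hx
      simp only [peano, List.mem_append, List.mem_singleton] at hx
      rcases hx with ((((((hx|hx)|hx)|hx)|hx)|hx)|hx)
      · exact mem_phi1 X hmem x hx
      · omega
      · exact hmem x hx
      · omega
      · exact hmem x hx
      · omega
      · exact mem_phi2 X hmem x hx
    have c1p1 : (phi1 X).count 1 = X.count 2 := by
      apply count_phi1; intro x hx; have := hmem x hx; by_cases h' : x = 1 <;> simp [h'] <;> omega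
    have c3p1 : (phi1 X).count 3 = X.count 4 := by
      apply count_phi1; intro x hx; have := hmem x hx; by_cases h' : x = 1 <;> simp [h'] <;> omega
    have c2p1 : (phi1 X).count 2 = X.count 3 := by
      apply count_phi1; intro x hx; have := hmem x hx; by_cases h' : x = 1 <;> simp [h'] <;> omega
    have c4p1 : (phi1 X).count 4 = X.count 1 := by
      apply count_phi1; intro x hx; have := hmem x hx
      by_cases h' : x = 1 <;> simp [h'] <;> omega
    have c1p2 : (phi2 X).count 1 = X.count 4 := by
      apply count_phi2; intro x hx; have := hmem x hx; by_cases h' : x = 4 <;> simp [h'] <;> omega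
    have c3p2 : (phi2 X).count 3 = X.count 2 := by
      apply count_phi2; intro x hx; have := hmem x hx; by_cases h' : x = 4 <;> simp [h'] <;> omega
    have c2p2 : (phi2 X).count 2 = X.count 1 := by
      apply count_phi2; intro x hx; have := hmem x hx; by_cases h' : x = 4 <;> simp [h'] <;> omega
    have c4p2 : (phi2 X).count 4 = X.count 3 := by
      apply count_phi2; intro x hx; have := hmem x hx; by_cases h' : x = 4 <;> simp [h'] <;> omega
    have expand : ∀ a : ℕ, (peano (n+2)).count a =
        (phi1 X).count a + [1].count a + X.count a + [2].count a + X.count a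
          + [3].count a + (phi2 X).count a := by
      intro a
      simp only [peano, List.count_append, ← hX]
    have hp : 1 ≤ 4 ^ n := Nat.one_le_pow _ _ (by norm_num)
    refine ⟨?_, ?_, ?_, hmem'⟩
    · rw [expand, c1p1, c1p2, pow_succ]
      simp [List.count_cons, List.count_nil]
      omega
    · rw [expand, c3p1, c3p2, pow_succ]
      simp [List.count_cons, List.count_nil]
      omega
    · rw [expand, expand, c2p1, c2p2, c4p1, c4p2, pow_succ]
      simp [List.count_cons, List.count_nil]
      omega

lemma phi1_head? (X : List ℕ) :
    (phi1 X).head? = (X.getLast?).map (fun x => if x = 1 then 4 else x - 1) := by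
  unfold phi1
  rw [List.head?_map, List.head?_reverse]

lemma phi2_getLast? (X : List ℕ) :
    (phi2 X).getLast? = (X.head?).map (fun x => if x = 4 then 1 else x + 1) := by
  unfold phi2
  rw [List.getLast?_map, List.getLast?_reverse]

lemma peano_head_step (n g : ℕ) (hg : (peano (n+1)).getLast? = some g) :
    (peano (n+2)).head? = some (if g = 1 then 4 else g - 1) := by
  simp only [peano, List.head?_append, phi1_head?, hg, Option.map_some]
  rfl

lemma peano_last_step (n h : ℕ) (hh : (peano (n+1)).head? = some h) :
    (peano (n+2)).getLast? = some (if h = 4 then 1 else h + 1) := by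
  simp only [peano, List.getLast?_append, phi2_getLast?, hh, Option.map_some]
  rfl

lemma peano_hl (k : ℕ) :
    ((peano (2*k+1)).head? = some 1 ∧ (peano (2*k+1)).getLast? = some 3) ∧
    ((peano (2*k+2)).head? = some 2 ∧ (peano (2*k+2)).getLast? = some 2) := by
  induction k with
  | zero =>
    refine ⟨⟨rfl, by decide⟩, ?_, ?_⟩ <;> decide
  | succ k ih =>
    obtain ⟨⟨ho1, ho2⟩, he1, he2⟩ := ih
    have e1 : 2*(k+1)+1 = (2*k+2)+1 := by ring
    have e2 : 2*(k+1)+2 = (2*(k+1)+1)+1 := by ring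
    have hh : (peano ((2*k+2)+1)).head? = some 1 := by
      have := peano_head_step (2*k+1) 2 he2
      simpa using this
    have hl : (peano ((2*k+2)+1)).getLast? = some 3 := by
      have := peano_last_step (2*k+1) 2 he1
      simpa using this
    have hh2 : (peano ((2*(k+1)+1)+1)).head? = some 2 := by
      have := peano_head_step (2*k+2) 3 (by rw [← e1] at hl; exact (e1 ▸ hl))
      simpa [e1] using this
    have hl2 : (peano ((2*(k+1)+1)+1)).getLast? = some 2 := by
      have := peano_last_step (2*k+2) 1 (e1 ▸ hh)
      simpa [e1] using this
    exact ⟨⟨e1 ▸ hh, e1 ▸ hl⟩, e2 ▸ hh2, e2 ▸ hl2⟩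

lemma pat112_zero (w : List ℕ) (ℓ : ℕ) (h : ¬ w.headI < w.getLastD 0) :
    pat112Count w ℓ = 0 := by
  unfold pat112Count
  rw [Finset.card_eq_zero, Finset.filter_eq_empty_iff]
  intro s _
  tauto

lemma pat112_choose (w : List ℕ) (ℓ : ℕ) (hne : w ≠ [])
    (hlt : w.headI < w.getLastD 0) :
    pat112Count w ℓ = Nat.choose (w.count w.headI - 1) ℓ := by
  have hn : 0 < w.length := List.length_pos_iff.mpr hne
  have h0 : w.get ⟨0, hn⟩ = w.headI := by
    cases w with
    | nil => exact absurd rfl hne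
    | cons a t => rfl
  have hlast : w.get ⟨w.length - 1, by omega⟩ = w.getLastD 0 := by
    rw [List.getLastD_eq_getLast?, List.getLast?_eq_getLast hne, Option.getD_some,
      List.getLast_eq_getElem]
    simp [List.get_eq_getElem]
  set S : Finset (Fin w.length) := Finset.univ.filter
    (fun i : Fin w.length => 0 < (i:ℕ) ∧ (i:ℕ) < w.length - 1 ∧ w.get i = w.headI) with hS
  have hfilt : (Finset.univ.filter (fun s : Finset (Fin w.length) =>
      s.card = ℓ ∧ (∀ i ∈ s, 0 < (i : ℕ) ∧ (i : ℕ) < w.length - 1) ∧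
        (∀ i ∈ s, w.get i = w.headI) ∧ w.headI < w.getLastD 0))
      = Finset.powersetCard ℓ S := by
    ext s
    simp only [Finset.mem_filter, Finset.mem_univ, true_and, Finset.mem_powersetCard,
      hS, Finset.subset_iff, Finset.mem_filter]
    constructor
    · rintro ⟨hc, hint, hget, -⟩
      exact ⟨fun i hi => ⟨(hint i hi).1, (hint i hi).2, hget i hi⟩, hc⟩
    · rintro ⟨hsub, hc⟩
      exact ⟨hc, fun i hi => ⟨(hsub hi).1, (hsub hi).2.1⟩,
        fun i hi => (hsub hi).2.2, hlt⟩
  have hScard : S.card = w.count w.headI - 1 := by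
    have hSerase : S = (Finset.univ.filter
        (fun i : Fin w.length => w.get i = w.headI)).erase ⟨0, hn⟩ := by
      ext i
      simp only [hS, Finset.mem_filter, Finset.mem_univ, true_and, Finset.mem_erase]
      constructor
      · rintro ⟨h1, _, h3⟩
        refine ⟨?_, h3⟩
        intro hi0
        rw [hi0] at h1
        simp at h1
      · rintro ⟨h1, h3⟩
        have hi0 : 0 < (i : ℕ) := by
          rcases Nat.eq_zero_or_pos (i : ℕ) with h | h
          · exact absurd (Fin.ext h) h1
          · exact h
        refine ⟨hi0, ?_, h3⟩
        by_contra hge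
        have hieq : (i : ℕ) = w.length - 1 := by
          have := i.isLt; omega
        have : w.get i = w.getLastD 0 := by
          rw [← hlast]
          congr 1
          exact Fin.ext hieq
        rw [h3] at this
        omega
    rw [hSerase, Finset.card_erase_of_mem, card_filter_get]
    simp only [Finset.mem_filter, Finset.mem_univ, true_and]
    exact h0
  unfold pat112Count
  rw [hfilt, Finset.card_powersetCard, hScard]

lemma headI_of_head? {w : List ℕ} {a : ℕ} (h : w.head? = some a) : w.headI = a := by
  cases w with
  | nil => simp at h
  | cons x t => simpa using h

theorem peano_pat112 (k ℓ : ℕ) (hℓ : 1 ≤ ℓ) :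
    pat112Count (peano (2 * k + 1)) ℓ = Nat.choose (4 ^ (2 * k) - 1) ℓ ∧
      pat112Count (peano (2 * k + 2)) ℓ = 0 := by
  obtain ⟨⟨ho1, ho2⟩, he1, he2⟩ := peano_hl k
  have hodd_head : (peano (2*k+1)).headI = 1 := headI_of_head? ho1
  have hodd_last : (peano (2*k+1)).getLastD 0 = 3 := by
    rw [List.getLastD_eq_getLast?, ho2]; rfl
  have heven_head : (peano (2*k+2)).headI = 2 := headI_of_head? he1
  have heven_last : (peano (2*k+2)).getLastD 0 = 2 := by
    rw [List.getLastD_eq_getLast?, he2]; rfl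
  have hne : peano (2*k+1) ≠ [] := by
    intro h; rw [h] at ho1; simp at ho1
  constructor
  · rw [pat112_choose _ _ hne (by rw [hodd_head, hodd_last]; norm_num), hodd_head]
    obtain ⟨h1, -, -, -⟩ := peano_counts (2*k)
    rw [h1]
  · exact pat112_zero _ _ (by rw [heven_head, heven_last]; omega)
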